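/- Consider the ODE system s_i'(t) = −(1/y_i) F(s(t)) x(t) for i = 1,…,n and x'(t) = (−D + F(s(t))) x(t). Every solution (s(t), x(t)) with initial condition (s(0), x(0)) in the open positive cone ℝ₊^{n+1} exists for all t ≥ 0, is bounded, and satisfies s_i(t) > 0 for all i = 1,…,n and x(t) > 0 for all t ≥ 0; moreover each s_i(t) is nonincreasing in t. -/

import Mathlib

open Filter Set Topology

noncomputable section

/-- Hypotheses on the uptake function `F`: Lipschitz on the closed positive cone,
vanishing when some nutrient is exhausted, positive on the open positive cone, and
strictly increasing in each argument on the positive cone. -/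
def FHyp {n : ℕ} (F : (Fin n → ℝ) → ℝ) : Prop :=
  (∃ K : NNReal, LipschitzOnWith K F {s : Fin n → ℝ | ∀ i, 0 ≤ s i}) ∧
  (∀ s : Fin n → ℝ, (∀ i, 0 ≤ s i) → (∃ i, s i = 0) → F s = 0) ∧
  (∀ s : Fin n → ℝ, (∀ i, 0 < s i) → 0 < F s) ∧
  (∀ s : Fin n → ℝ, (∀ i, 0 < s i) → ∀ i : Fin n, ∀ ε : ℝ, 0 < ε →
    F s < F (Function.update s i (s i + ε)))

/-- The component Lyapunov-like function `V_i(s) = y₁(s₁ⁱⁿ - s₁) - y_i(s_iⁱⁿ - s_i)`. -/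
def Vfun {n : ℕ} [NeZero n] (y sIn : Fin n → ℝ) (i : Fin n) (s : Fin n → ℝ) : ℝ :=
  y 0 * (sIn 0 - s 0) - y i * (sIn i - s i)

/-- `V̄_i = y₁(s₁ⁱⁿ - s̄₁) - y_i s_iⁱⁿ`. -/
def Vbar {n : ℕ} [NeZero n] (y sIn : Fin n → ℝ) (sbar1 : ℝ) (i : Fin n) : ℝ :=
  y 0 * (sIn 0 - sbar1) - y i * sIn i

/-- `Ω₀ = {s ∈ ℝⁿ₊ : s₁ ≥ s̄₁, V_i(s) < V̄_i for at least one i = 2,…,n}`. -/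
def Omega0 {n : ℕ} [NeZero n] (y sIn : Fin n → ℝ) (sbar1 : ℝ) : Set (Fin n → ℝ) :=
  {s | (∀ i, 0 < s i) ∧ sbar1 ≤ s 0 ∧ ∃ i, i ≠ 0 ∧ Vfun y sIn i s < Vbar y sIn sbar1 i}

/-- `Ω₁ = {s ∈ ℝⁿ₊ : s₁ ≥ s̄₁, V_i(s) > V̄_i for all i = 2,…,n}`. -/
def Omega1 {n : ℕ} [NeZero n] (y sIn : Fin n → ℝ) (sbar1 : ℝ) : Set (Fin n → ℝ) :=
  {s | (∀ i, 0 < s i) ∧ sbar1 ≤ s 0 ∧ ∀ i, i ≠ 0 → Vbar y sIn sbar1 i < Vfun y sIn i s}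

/-- `φ_ν(s⁰) = s⁰ - ν y₁ (s₁⁰ - s̄₁) Y`, with `Y = (1/y₁, …, 1/yₙ)`. -/
def phiNu {n : ℕ} [NeZero n] (y : Fin n → ℝ) (sbar1 ν : ℝ) (s0 : Fin n → ℝ) : Fin n → ℝ :=
  fun i => s0 i - ν * (y 0 * (s0 0 - sbar1)) * (1 / y i)

/-- `I(s⁰) = y₁ (s₁⁰ - s̄₁) ∫₀¹ (1 - D / F(φ_ν(s⁰))) dν`, the net biomass change over one cycle. -/
def Ifun {n : ℕ} [NeZero n] (F : (Fin n → ℝ) → ℝ) (D : ℝ) (y : Fin n → ℝ)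
    (sbar1 : ℝ) (s0 : Fin n → ℝ) : ℝ :=
  y 0 * (s0 0 - sbar1) * ∫ ν in (0:ℝ)..1, (1 - D / F (phiNu y sbar1 ν s0))

/-- `ŝ⁺(r) = sⁱⁿ - (1 - r) y₁ (s₁ⁱⁿ - s̄₁) Y`. -/
def shatP {n : ℕ} [NeZero n] (y sIn : Fin n → ℝ) (sbar1 r : ℝ) : Fin n → ℝ :=
  fun i => sIn i - (1 - r) * (y 0 * (sIn 0 - sbar1)) * (1 / y i)

/-- `μ(r) = y₁ (s̄₁⁺ - s̄₁) ∫₀¹ (1 - D / F(φ_ν(ŝ⁺(r)))) dν`, where `s̄₁⁺ = r s₁ⁱⁿ + (1-r) s̄₁`. -/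
def muFun {n : ℕ} [NeZero n] (F : (Fin n → ℝ) → ℝ) (D : ℝ) (y sIn : Fin n → ℝ)
    (sbar1 r : ℝ) : ℝ :=
  y 0 * ((r * sIn 0 + (1 - r) * sbar1) - sbar1) *
    ∫ ν in (0:ℝ)..1, (1 - D / F (phiNu y sbar1 ν (shatP y sIn sbar1 r)))

/-- `Γ_ρ⁺ = {s ∈ ℝⁿ₊ : s₁ = s̄₁⁺, V_i(s) > -ρ for all i = 2,…,n}`. -/
def GammaRho {n : ℕ} [NeZero n] (y sIn : Fin n → ℝ) (sbar1 r ρ : ℝ) : Set (Fin n → ℝ) :=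
  {s | (∀ i, 0 < s i) ∧ s 0 = r * sIn 0 + (1 - r) * sbar1 ∧
    ∀ i, i ≠ 0 → -ρ < Vfun y sIn i s}

/-- `Ω^ρ = {s ∈ Ω₁ : V_i(s) > -ρ for all i = 2,…,n}`. -/
def OmegaRho {n : ℕ} [NeZero n] (y sIn : Fin n → ℝ) (sbar1 ρ : ℝ) : Set (Fin n → ℝ) :=
  {s | s ∈ Omega1 y sIn sbar1 ∧ ∀ i, i ≠ 0 → -ρ < Vfun y sIn i s}

/-- The cycle map `s ↦ g(φ₁(s)) = r sⁱⁿ + (1 - r) φ₁(s)`. -/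
def cycMap {n : ℕ} [NeZero n] (y sIn : Fin n → ℝ) (sbar1 r : ℝ)
    (s : Fin n → ℝ) : Fin n → ℝ :=
  fun i => r * sIn i + (1 - r) * phiNu y sbar1 1 s i

/-- A (right-continuous) solution of the impulsive self-cycling fermentation model
`eq:model`: between impulse times the ODEs hold, impulse times are exactly the times
where the left limit of `s₁` equals the threshold `s̄₁`, and at an impulse time the
state jumps according to the decanting/refilling map. -/
structure SCFSol (n : ℕ) [NeZero n] (F : (Fin n → ℝ) → ℝ) (D : ℝ) (y : Fin n → ℝ)
    (r : ℝ) (sIn : Fin n → ℝ) (sbar1 : ℝ) where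
  /-- nutrient concentrations -/
  s : ℝ → Fin n → ℝ
  /-- biomass concentration -/
  x : ℝ → ℝ
  /-- the set of impulse times -/
  T : Set ℝ
  /-- left limits of `s` (meaningful at impulse times) -/
  sLim : ℝ → Fin n → ℝ
  /-- left limit of `x` (meaningful at impulse times) -/
  xLim : ℝ → ℝ
  T_pos : ∀ t ∈ T, 0 < t
  init : sbar1 < s 0 0
  ode_s : ∀ t : ℝ, 0 ≤ t → t ∉ T → ∀ i,
    HasDerivAt (fun τ => s τ i) (-(1 / y i) * F (s t) * x t) t
  ode_x : ∀ t : ℝ, 0 ≤ t → t ∉ T →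
    HasDerivAt x ((-D + F (s t)) * x t) t
  left_s : ∀ t ∈ T, ∀ i,
    Filter.Tendsto (fun τ => s τ i) (nhdsWithin t (Set.Iio t)) (nhds (sLim t i))
  left_x : ∀ t ∈ T, Filter.Tendsto x (nhdsWithin t (Set.Iio t)) (nhds (xLim t))
  hit : ∀ t ∈ T, sLim t 0 = sbar1
  exact_hit : ∀ t : ℝ, 0 < t → t ∉ T → s t 0 ≠ sbar1
  jump_s : ∀ t ∈ T, ∀ i, s t i = r * sIn i + (1 - r) * sLim t i
  jump_x : ∀ t ∈ T, x t = (1 - r) * xLim t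

/-- Convergence of a solution to the unique periodic orbit: there are infinitely many
impulses and, along the (increasing) enumeration of the impulse times, the post-impulse
nutrient states converge to `ŝ⁺(r)`, the post-impulse biomass converges to
`((1-r)/r) μ(r)`, and the pre-impulse biomass converges to `(1/r) μ(r)`. -/
def ConvergesToPeriodic {n : ℕ} [NeZero n] {F : (Fin n → ℝ) → ℝ} {D : ℝ}
    {y : Fin n → ℝ} {r : ℝ} {sIn : Fin n → ℝ} {sbar1 : ℝ}
    (sol : SCFSol n F D y r sIn sbar1) : Prop :=
  sol.T.Infinite ∧
  ∀ tk : ℕ → ℝ, StrictMono tk → Set.range tk = sol.T →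
    (∀ i, Filter.Tendsto (fun k => sol.s (tk k) i) Filter.atTop
      (nhds (shatP y sIn sbar1 r i))) ∧
    Filter.Tendsto (fun k => sol.x (tk k)) Filter.atTop
      (nhds ((1 - r) / r * muFun F D y sIn sbar1 r)) ∧
    Filter.Tendsto (fun k => sol.xLim (tk k)) Filter.atTop
      (nhds (1 / r * muFun F D y sIn sbar1 r))

/-- `F` is nonnegative on the closed positive cone. -/
lemma FHyp.nonneg {n : ℕ} {F : (Fin n → ℝ) → ℝ} (hF : FHyp F)
    {s : Fin n → ℝ} (hs : ∀ i, 0 ≤ s i) : 0 ≤ F s := by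
  by_cases h : ∀ i, 0 < s i
  · exact (hF.2.2.1 s h).le
  · push_neg at h
    obtain ⟨i, hi⟩ := h
    rw [hF.2.1 s hs ⟨i, le_antisymm hi (hs i)⟩]

/-- Lipschitz bound: `F s ≤ K * s i` on the closed cone. -/
lemma FHyp.le_lip {n : ℕ} {F : (Fin n → ℝ) → ℝ} (hF : FHyp F) {K : NNReal}
    (hK : LipschitzOnWith K F {s : Fin n → ℝ | ∀ i, 0 ≤ s i})
    {s : Fin n → ℝ} (hs : ∀ i, 0 ≤ s i) (i : Fin n) : F s ≤ K * s i := by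
  have hmem : s ∈ {s : Fin n → ℝ | ∀ i, 0 ≤ s i} := hs
  have hmem2 : Function.update s i 0 ∈ {s : Fin n → ℝ | ∀ i, 0 ≤ s i} := by
    intro j
    rcases eq_or_ne j i with rfl | hj
    · simp
    · simpa [Function.update_of_ne hj] using hs j
  have h0 : F (Function.update s i 0) = 0 :=
    hF.2.1 _ hmem2 ⟨i, Function.update_self i 0 s⟩
  have hdist : dist s (Function.update s i 0) ≤ s i := by
    rw [dist_pi_le_iff (hs i)]
    intro j
    rcases eq_or_ne j i with rfl | hj
    · simp [Real.dist_eq, abs_of_nonneg (hs j)]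
    · simp only [Function.update_of_ne hj, dist_self]
      exact hs i
  have := hK.dist_le_mul s hmem (Function.update s i 0) hmem2
  rw [h0, Real.dist_eq, sub_zero] at this
  calc F s ≤ |F s| := le_abs_self _
    _ ≤ K * dist s (Function.update s i 0) := this
    _ ≤ K * s i := by
        exact mul_le_mul_of_nonneg_left hdist K.2

/-- Grönwall-type monotonicity: if `0 ≤ f' + c f` on `[a,b]` then `f t * exp (c t)`
is monotone. -/
lemma exp_mul_mono_aux {f f' : ℝ → ℝ} {c a b : ℝ} (hab : a ≤ b)
    (hf : ∀ t ∈ Set.Icc a b, HasDerivAt f (f' t) t)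
    (h : ∀ t ∈ Set.Icc a b, 0 ≤ f' t + c * f t) :
    f a * Real.exp (c * a) ≤ f b * Real.exp (c * b) := by
  have hg : ∀ t ∈ Set.Icc a b,
      HasDerivAt (fun t => f t * Real.exp (c * t))
        ((f' t + c * f t) * Real.exp (c * t)) t := by
    intro t ht
    have h1 : HasDerivAt (fun t : ℝ => Real.exp (c * t)) (c * Real.exp (c * t)) t := by
      have := (Real.hasDerivAt_exp (c * t)).comp t ((hasDerivAt_id t).const_mul c)
      exact this.congr_deriv (by ring)
    have := (hf t ht).mul h1
    exact this.congr_deriv (by ring)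
  have hmono : MonotoneOn (fun t => f t * Real.exp (c * t)) (Set.Icc a b) := by
    apply monotoneOn_of_deriv_nonneg (convex_Icc a b)
    · exact fun t ht => (hg t ht).continuousAt.continuousWithinAt
    · exact fun t ht =>
        (hg t (interior_subset ht)).differentiableAt.differentiableWithinAt
    · intro t ht
      rw [(hg t (interior_subset ht)).deriv]
      exact mul_nonneg (h t (interior_subset ht)) (Real.exp_pos _).le
  exact hmono (Set.left_mem_Icc.2 hab) (Set.right_mem_Icc.2 hab) hab

/-- Lemma 2.1, first part: every (globally defined) solution of the
limiting ODE system with initial condition in the open positive cone is bounded, remains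
in the open positive cone for all `t ≥ 0`, and each nutrient concentration `s_i` is
nonincreasing on `[0, ∞)`. -/
theorem scf_ode_wellPosed {n : ℕ} [NeZero n] (F : (Fin n → ℝ) → ℝ) (hF : FHyp F)
    (D : ℝ) (hD : 0 < D) (y : Fin n → ℝ) (hy : ∀ i, 0 < y i)
    (s : ℝ → Fin n → ℝ) (x : ℝ → ℝ)
    (hode_s : ∀ t : ℝ, 0 ≤ t → ∀ i,
      HasDerivAt (fun τ => s τ i) (-(1 / y i) * F (s t) * x t) t)
    (hode_x : ∀ t : ℝ, 0 ≤ t → HasDerivAt x ((-D + F (s t)) * x t) t)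
    (hinit : (∀ i, 0 < s 0 i) ∧ 0 < x 0) :
    (∃ C : ℝ, ∀ t : ℝ, 0 ≤ t → |x t| ≤ C ∧ ∀ i, |s t i| ≤ C) ∧
    (∀ t : ℝ, 0 ≤ t → (∀ i, 0 < s t i) ∧ 0 < x t) ∧
    (∀ i, AntitoneOn (fun t => s t i) (Set.Ici (0:ℝ))) := by
  obtain ⟨K, hK⟩ := hF.1
  -- Step 1: positivity for all `t ≥ 0`.
  have key : ∀ T : ℝ, 0 ≤ T → ∀ t ∈ Set.Icc (0:ℝ) T, 0 < x t ∧ ∀ i, 0 < s t i := by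
    intro T hT
    by_contra hcon
    push_neg at hcon
    set Z : Set ℝ := (Set.Icc 0 T ∩ x ⁻¹' Set.Iic 0) ∪
      ⋃ i : Fin n, (Set.Icc 0 T ∩ (fun u => s u i) ⁻¹' Set.Iic 0) with hZdef
    have hZsub : Z ⊆ Set.Icc 0 T := by
      rintro u (⟨hu, -⟩ | hu)
      · exact hu
      · simp only [Set.mem_iUnion] at hu
        obtain ⟨i, hu, -⟩ := hu
        exact hu
    have hcx : ContinuousOn x (Set.Icc 0 T) := fun u hu =>
      (hode_x u hu.1).continuousAt.continuousWithinAt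
    have hcs : ∀ i, ContinuousOn (fun u => s u i) (Set.Icc 0 T) := fun i u hu =>
      (hode_s u hu.1 i).continuousAt.continuousWithinAt
    have hZclosed : IsClosed Z := by
      apply IsClosed.union
      · exact hcx.preimage_isClosed_of_isClosed isClosed_Icc isClosed_Iic
      · exact isClosed_iUnion_of_finite fun i =>
          (hcs i).preimage_isClosed_of_isClosed isClosed_Icc isClosed_Iic
    have hne : Z.Nonempty := by
      obtain ⟨t, htI, hbad⟩ := hcon
      refine ⟨t, ?_⟩
      by_cases hx : x t ≤ 0
      · exact Or.inl ⟨htI, hx⟩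
      · push_neg at hx
        obtain ⟨i, hi⟩ := hbad hx
        exact Or.inr (Set.mem_iUnion.2 ⟨i, htI, hi⟩)
    have hbdd : BddBelow Z := ⟨0, fun u hu => (hZsub hu).1⟩
    set t₀ := sInf Z with ht₀def
    have ht₀Z : t₀ ∈ Z := hZclosed.csInf_mem hne hbdd
    have ht₀I : t₀ ∈ Set.Icc 0 T := hZsub ht₀Z
    have h0notZ : (0:ℝ) ∉ Z := by
      rintro (⟨-, h⟩ | h)
      · exact absurd (Set.mem_Iic.1 h) (not_le.2 hinit.2)
      · simp only [Set.mem_iUnion] at h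
        obtain ⟨i, -, hi⟩ := h
        exact absurd (Set.mem_Iic.1 hi) (not_le.2 (hinit.1 i))
    have ht₀pos : 0 < t₀ := lt_of_le_of_ne ht₀I.1 fun h => h0notZ (h ▸ ht₀Z)
    have hlt : ∀ u, 0 ≤ u → u < t₀ → 0 < x u ∧ ∀ i, 0 < s u i := by
      intro u hu hu'
      have hnotZ : u ∉ Z := fun h => absurd (csInf_le hbdd h) (not_le.2 hu')
      have huI : u ∈ Set.Icc 0 T := ⟨hu, hu'.le.trans ht₀I.2⟩
      constructor
      · by_contra hx
        push_neg at hx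
        exact hnotZ (Or.inl ⟨huI, hx⟩)
      · intro i
        by_contra hsi
        push_neg at hsi
        exact hnotZ (Or.inr (Set.mem_iUnion.2 ⟨i, huI, hsi⟩))
    have hnn : ∀ u ∈ Set.Icc (0:ℝ) t₀, 0 ≤ x u ∧ ∀ i, 0 ≤ s u i := by
      intro u hu
      obtain ⟨hu0, hut⟩ := hu
      rcases lt_or_eq_of_le hut with h | heq
      · exact ⟨(hlt u hu0 h).1.le, fun i => ((hlt u hu0 h).2 i).le⟩
      · have hupos : 0 < u := heq ▸ ht₀pos
        have hIoo : Set.Ioo (0:ℝ) u ∈ nhdsWithin u (Set.Iio u) :=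
          Ioo_mem_nhdsLT_of_mem ⟨hupos, le_refl u⟩
        constructor
        · refine ge_of_tendsto
            (((hode_x u hu0).continuousAt.tendsto).mono_left (nhdsWithin_le_nhds (s := Set.Iio u))) ?_
          filter_upwards [hIoo] with v hv
          exact (hlt v hv.1.le (heq ▸ hv.2)).1.le
        · intro i
          refine ge_of_tendsto
            (((hode_s u hu0 i).continuousAt.tendsto).mono_left (nhdsWithin_le_nhds (s := Set.Iio u))) ?_
          filter_upwards [hIoo] with v hv
          exact ((hlt v hv.1.le (heq ▸ hv.2)).2 i).le
    have hFnn : ∀ u ∈ Set.Icc (0:ℝ) t₀, 0 ≤ F (s u) := fun u hu =>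
      hF.nonneg (hnn u hu).2
    -- `x t₀ > 0` via Grönwall
    have hxpos : 0 < x t₀ := by
      have hg := exp_mul_mono_aux (f := x) (f' := fun u => (-D + F (s u)) * x u)
        (c := D) ht₀pos.le (fun u hu => hode_x u hu.1) ?_
      · nlinarith [Real.exp_pos (D * t₀), Real.exp_pos (D * 0), hinit.2,
          mul_pos hinit.2 (Real.exp_pos (D * 0))]
      · intro u hu
        have h1 := mul_nonneg (hFnn u hu) (hnn u hu).1
        show 0 ≤ (-D + F (s u)) * x u + D * x u
        nlinarith
    -- bound on `x` over `[0, t₀]`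
    obtain ⟨tb, htbI, htB⟩ := isCompact_Icc.exists_isMaxOn
      (Set.nonempty_Icc.2 ht₀pos.le)
      (fun u (hu : u ∈ Set.Icc (0:ℝ) t₀) =>
        (hode_x u hu.1).continuousAt.continuousWithinAt)
    set B := x tb with hBdef
    have hB : ∀ u ∈ Set.Icc (0:ℝ) t₀, x u ≤ B := fun u hu => htB hu
    have hBnn : 0 ≤ B := (hnn tb htbI).1
    have hspos : ∀ i, 0 < s t₀ i := by
      intro i
      have hyi := hy i
      have hg := exp_mul_mono_aux (f := fun u => s u i)
        (f' := fun u => -(1 / y i) * F (s u) * x u)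
        (c := (K : ℝ) * B / y i) ht₀pos.le (fun u hu => hode_s u hu.1 i) ?_
      · replace hg : s 0 i * Real.exp ((K : ℝ) * B / y i * 0) ≤
            s t₀ i * Real.exp ((K : ℝ) * B / y i * t₀) := hg
        nlinarith [Real.exp_pos ((K : ℝ) * B / y i * t₀),
          Real.exp_pos ((K : ℝ) * B / y i * 0), hinit.1 i,
          mul_pos (hinit.1 i) (Real.exp_pos ((K : ℝ) * B / y i * 0))]
      · intro u hu
        have h1 : F (s u) ≤ K * s u i := hF.le_lip hK (hnn u hu).2 i
        have h2 : F (s u) * x u ≤ (K * s u i) * B :=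
          mul_le_mul h1 (hB u hu) (hnn u hu).1
            (mul_nonneg K.2 ((hnn u hu).2 i))
        have hyinv : (0:ℝ) < 1 / y i := one_div_pos.2 hyi
        have expand : -(1 / y i) * F (s u) * x u + (K : ℝ) * B / y i * s u i
            = (1 / y i) * ((K * s u i) * B - F (s u) * x u) := by
          field_simp
          ring
        show 0 ≤ -(1 / y i) * F (s u) * x u + (K : ℝ) * B / y i * s u i
        rw [expand]
        exact mul_nonneg hyinv.le (by linarith)
    -- contradiction with `t₀ ∈ Z`
    rcases ht₀Z with ⟨-, h⟩ | h
    · exact absurd (Set.mem_Iic.1 h) (not_le.2 hxpos)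
    · simp only [Set.mem_iUnion] at h
      obtain ⟨i, -, hi⟩ := h
      exact absurd (Set.mem_Iic.1 hi) (not_le.2 (hspos i))
  have hpos : ∀ t : ℝ, 0 ≤ t → (∀ i, 0 < s t i) ∧ 0 < x t := by
    intro t ht
    have := key t ht t (Set.mem_Icc.2 ⟨ht, le_refl t⟩)
    exact ⟨this.2, this.1⟩
  have hFnn2 : ∀ t : ℝ, 0 ≤ t → 0 ≤ F (s t) := fun t ht =>
    hF.nonneg fun i => ((hpos t ht).1 i).le
  -- Step 2: each `s i` is nonincreasing.
  have hanti : ∀ i, AntitoneOn (fun t => s t i) (Set.Ici 0) := by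
    intro i
    apply antitoneOn_of_deriv_nonpos (convex_Ici 0)
    · exact fun t ht => (hode_s t ht i).continuousAt.continuousWithinAt
    · intro t ht
      rw [interior_Ici] at ht
      exact (hode_s t ht.le i).differentiableAt.differentiableWithinAt
    · intro t ht
      rw [interior_Ici] at ht
      rw [(hode_s t ht.le i).deriv]
      have h1 := mul_nonneg (hFnn2 t ht.le) (hpos t ht.le).2.le
      have h2 : (0:ℝ) ≤ 1 / y i := (one_div_pos.2 (hy i)).le
      nlinarith [mul_nonneg h2 h1]
  -- Step 3: boundedness via the conservation function `W t = y 0 * s t 0 + x t`.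
  have hW : AntitoneOn (fun t => y 0 * s t 0 + x t) (Set.Ici 0) := by
    have hWd : ∀ t : ℝ, 0 ≤ t → HasDerivAt (fun t => y 0 * s t 0 + x t)
        (y 0 * (-(1 / y 0) * F (s t) * x t) + (-D + F (s t)) * x t) t := fun t ht =>
      ((hode_s t ht 0).const_mul (y 0)).add (hode_x t ht)
    apply antitoneOn_of_deriv_nonpos (convex_Ici 0)
    · exact fun t ht => (hWd t ht).continuousAt.continuousWithinAt
    · intro t ht
      rw [interior_Ici] at ht
      exact (hWd t ht.le).differentiableAt.differentiableWithinAt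
    · intro t ht
      rw [interior_Ici] at ht
      rw [(hWd t ht.le).deriv]
      have hy0 : (0:ℝ) < y 0 := hy 0
      have hsimp : y 0 * (-(1 / y 0) * F (s t) * x t) = -(F (s t) * x t) := by
        field_simp
      rw [hsimp]
      nlinarith [mul_pos hD (hpos t ht.le).2]
  refine ⟨⟨y 0 * s 0 0 + x 0 + ∑ i, s 0 i, ?_⟩, hpos, hanti⟩
  intro t ht
  have hsum : (0:ℝ) ≤ ∑ i, s 0 i :=
    Finset.sum_nonneg fun i _ => (hinit.1 i).le
  have hW0 : y 0 * s t 0 + x t ≤ y 0 * s 0 0 + x 0 :=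
    hW (Set.self_mem_Ici) (Set.mem_Ici.2 ht) ht
  have hx0 : 0 < x t := (hpos t ht).2
  have hs0 : ∀ i, 0 < s t i := (hpos t ht).1
  have hy0s : 0 < y 0 * s t 0 := mul_pos (hy 0) (hs0 0)
  constructor
  · rw [abs_of_pos hx0]
    linarith
  · intro i
    rw [abs_of_pos (hs0 i)]
    have h1 : s t i ≤ s 0 i := hanti i Set.self_mem_Ici (Set.mem_Ici.2 ht) ht
    have h2 : s 0 i ≤ ∑ j, s 0 j :=
      Finset.single_le_sum (fun j _ => (hinit.1 j).le) (Finset.mem_univ i)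
    have h3 : 0 < y 0 * s 0 0 + x 0 := by nlinarith [mul_pos (hy 0) (hinit.1 0), hinit.2]
    linarith

end
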